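/- Let A be an abelian group that is not slender and has cardinality strictly less than 2^ℵ₀. Then the set of group homomorphisms Hom(∏_{n ∈ ℕ} ℤ, A) has cardinality exactly 2^{2^{ℵ₀}}. -/

import Mathlib

/-- An abelian group `A` is slender if every homomorphism `∏_{n ∈ ℕ} ℤ → A` vanishes on
all sequences supported beyond the first `n` coordinates, for some `n`. -/
def Slender (A : Type) [AddCommGroup A] : Prop :=
  ∀ φ : (ℕ → ℤ) →+ A, ∃ n : ℕ, ∀ x : ℕ → ℤ, (∀ i < n, x i = 0) → φ x = 0

open Cardinal

lemma card_hom_le (A : Type) [AddCommGroup A] (h : #A ≤ 2 ^ aleph0) :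
    #((ℕ → ℤ) →+ A) ≤ (2:Cardinal) ^ ((2:Cardinal) ^ aleph0) := by
  have h1 : #((ℕ → ℤ) →+ A) ≤ #((ℕ → ℤ) → A) :=
    mk_le_of_injective (f := fun f => (f : (ℕ → ℤ) → A)) DFunLike.coe_injective
  have h2 : #((ℕ → ℤ) → A) = #A ^ #(ℕ → ℤ) := (power_def _ _).symm
  have h3 : #(ℕ → ℤ) = (2:Cardinal) ^ aleph0 := by
    rw [← power_def, mk_int, mk_nat, power_self_eq le_rfl]
  calc #((ℕ → ℤ) →+ A) ≤ #A ^ #(ℕ → ℤ) := h2 ▸ h1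
    _ ≤ ((2:Cardinal) ^ aleph0) ^ #(ℕ → ℤ) := power_le_power_right h
    _ = ((2:Cardinal) ^ aleph0) ^ ((2:Cardinal) ^ aleph0) := by rw [h3]
    _ = (2:Cardinal) ^ ((2:Cardinal) ^ aleph0) := by
        rw [← power_mul,
          Cardinal.mul_eq_right ((Cardinal.cantor ℵ₀).le) ((Cardinal.cantor ℵ₀).le.trans le_rfl |>.trans le_rfl) aleph0_ne_zero]

lemma core (A : Type) [AddCommGroup A] (K : Type) [Field K]
    (V : Type) [AddCommGroup V] [Module K V]
    (hK : #K < 2 ^ aleph0) (hV : #V = 2 ^ aleph0)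
    (ι : (ℕ → ℤ) →+ V) (hι : Submodule.span K (Set.range ι) = ⊤)
    (j : K →+ A) (hj : Function.Injective j) :
    (2:Cardinal) ^ ((2:Cardinal) ^ aleph0) ≤ #((ℕ → ℤ) →+ A) := by
  classical
  set ix := Module.Basis.ofVectorSpaceIndex K V with hix
  let B : Module.Basis ix K V := Module.Basis.ofVectorSpace K V
  have hrepr : #V = #(ix →₀ K) := mk_congr B.repr.toEquiv
  -- the index is infinite
  have hinf : Infinite ix := by
    by_contra hfin
    rw [not_infinite_iff_finite] at hfin
    have : Fintype ix := Fintype.ofFinite ix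
    rw [mk_finsupp_of_fintype] at hrepr
    have hlt : #K ^ (Fintype.card ix) < 2 ^ aleph0 := by
      have : ∀ n : ℕ, #K ^ n < 2 ^ aleph0 := by
        intro n
        induction n with
        | zero => simpa using nat_lt_continuum 1
        | succ m ih =>
            rw [pow_succ]
            exact mul_lt_of_lt (Cardinal.cantor ℵ₀).le ih hK
      exact this _
    rw [← hrepr, hV] at hlt
    exact absurd hlt (lt_irrefl _)
  -- the index has cardinality continuum
  have hixcard : #ix = 2 ^ aleph0 := by
    rw [mk_finsupp_of_infinite] at hrepr
    rcases max_cases #ix #K with ⟨h1, h2⟩ | ⟨h1, h2⟩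
    · rw [h1] at hrepr; exact hV ▸ hrepr.symm ▸ rfl
    · rw [h1] at hrepr; rw [← hrepr, hV] at hK; exact absurd hK (lt_irrefl _)
  -- injection from the dual space into the hom set
  have hGinj : Function.Injective
      (fun f : V →ₗ[K] K => j.comp ((f : V →+ K).comp ι)) := by
    intro f g hfg
    refine LinearMap.ext_on hι (fun v hv => ?_)
    obtain ⟨x, rfl⟩ := hv
    exact hj (congrArg (fun h => h x) (congrArg DFunLike.coe hfg))
  have hdual : #(V →ₗ[K] K) = #(ix → K) := (mk_congr (B.constr K).toEquiv).symm
  have h2K : (2:Cardinal) ≤ #K := by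
    rw [Cardinal.two_le_iff]
    exact ⟨0, 1, zero_ne_one⟩
  calc (2:Cardinal) ^ ((2:Cardinal) ^ aleph0)
      ≤ #K ^ ((2:Cardinal) ^ aleph0) := power_le_power_right h2K
    _ = #K ^ #ix := by rw [hixcard]
    _ = #(ix → K) := (power_def _ _)
    _ = #(V →ₗ[K] K) := hdual.symm
    _ ≤ #((ℕ → ℤ) →+ A) := mk_le_of_injective hGinj

lemma prime_order_elt (A : Type) [AddCommGroup A]
    (a : A) (ha : a ≠ 0) (n : ℕ) (hn : 0 < n) (hna : n • a = 0) :
    ∃ (p : ℕ) (_ : Fact p.Prime) (b : A), b ≠ 0 ∧ addOrderOf b = p := by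
  have hfin : IsOfFinAddOrder a := isOfFinAddOrder_iff_nsmul_eq_zero.mpr ⟨n, hn, hna⟩
  set m := addOrderOf a with hm
  have hmpos : 0 < m := hfin.addOrderOf_pos
  have hm1 : m ≠ 1 := fun h => ha (by rwa [hm, AddMonoid.addOrderOf_eq_one_iff] at h)
  set p := m.minFac with hp
  have hpp : p.Prime := Nat.minFac_prime hm1
  have : Fact p.Prime := ⟨hpp⟩
  set b := (m / p) • a with hb
  have hpb : p • b = 0 := by
    rw [hb, ← mul_nsmul', Nat.mul_div_cancel' (Nat.minFac_dvd m)]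
    exact addOrderOf_nsmul_eq_zero a
  have hb0 : b ≠ 0 := by
    intro h0
    have hdvd : m ∣ m / p := (addOrderOf_dvd_iff_nsmul_eq_zero (x := a)).mpr (by rw [← hb, h0] : (m / p) • a = 0)
    have hlt : m / p < m := Nat.div_lt_self hmpos hpp.one_lt
    have hpos : 0 < m / p := Nat.div_pos (Nat.minFac_le hmpos) hpp.pos
    exact absurd (Nat.le_of_dvd hpos hdvd) (not_le.mpr hlt)
  exact ⟨p, this, b, hb0, addOrderOf_eq_prime hpb hb0⟩

lemma zmod_hom (A : Type) [AddCommGroup A] (p : ℕ) [hp : Fact p.Prime]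
    (b : A) (hb : b ≠ 0) (hob : addOrderOf b = p) :
    ∃ j : ZMod p →+ A, Function.Injective j := by
  have hf : (zmultiplesHom A b) ((p : ℕ) : ℤ) = 0 := by
    simp [zmultiplesHom_apply, ← hob]
  refine ⟨ZMod.lift p ⟨zmultiplesHom A b, hf⟩, ?_⟩
  rw [injective_iff_map_eq_zero]
  intro x hx
  obtain ⟨k, rfl⟩ := ZMod.intCast_surjective x
  rw [ZMod.lift_coe] at hx
  have hk : k • b = 0 := hx
  have : (addOrderOf b : ℤ) ∣ k := addOrderOf_dvd_iff_zsmul_eq_zero.mpr hk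
  rw [hob] at this
  exact (ZMod.intCast_zmod_eq_zero_iff_dvd k p).mpr this

lemma zmod_pi (p : ℕ) [hp : Fact p.Prime] :
    ∃ ι : (ℕ → ℤ) →+ (ℕ → ZMod p),
      Submodule.span (ZMod p) (Set.range ι) = ⊤ ∧ #(ℕ → ZMod p) = 2 ^ aleph0 := by
  refine ⟨{ toFun := fun x i => ((x i : ℤ) : ZMod p),
            map_zero' := by funext i; simp,
            map_add' := by intro x y; funext i; push_cast; simp }, ?_, ?_⟩
  · have hsurj : Function.Surjective
        (fun (x : ℕ → ℤ) (i : ℕ) => ((x i : ℤ) : ZMod p)) := by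
      intro v
      exact ⟨fun i => (ZMod.cast (v i) : ℤ), funext fun i => ZMod.intCast_zmod_cast (v i)⟩
    rw [AddMonoidHom.coe_mk, ZeroHom.coe_mk, hsurj.range_eq, Submodule.span_univ]
  · apply le_antisymm
    · calc #(ℕ → ZMod p) = #(ZMod p) ^ (ℵ₀ : Cardinal) := by rw [← power_def, mk_nat]
        _ ≤ (ℵ₀ : Cardinal) ^ (ℵ₀ : Cardinal) :=
            power_le_power_right (lt_aleph0_of_finite _).le
        _ = 2 ^ (ℵ₀ : Cardinal) := power_self_eq le_rfl
    · calc (2 : Cardinal) ^ (ℵ₀ : Cardinal) ≤ #(ZMod p) ^ (ℵ₀ : Cardinal) := by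
            apply power_le_power_right
            rw [Cardinal.two_le_iff]
            exact ⟨0, 1, zero_ne_one⟩
        _ = #(ℕ → ZMod p) := by rw [← power_def, mk_nat]

lemma rat_hom (A : Type) [AddCommGroup A]
    (htf : ∀ (x : A) (n : ℕ), 0 < n → n • x = 0 → x = 0)
    (a : A) (ha : a ≠ 0) (hdiv : ∀ n : ℕ, 0 < n → ∃ c : A, n • c = a) :
    ∃ j : ℚ →+ A, Function.Injective j := by
  classical
  have hb : ∃ b : ℕ → A, ∀ n : ℕ, 0 < n → (n : ℤ) • b n = a := by
    refine ⟨fun n => if h : 0 < n then (hdiv n h).choose else 0, fun n hn => ?_⟩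
    simp only [dif_pos hn]
    rw [natCast_zsmul]
    exact (hdiv n hn).choose_spec
  obtain ⟨b, hbspec⟩ := hb
  have hzb : ∀ (z : ℤ) (n : ℕ), 0 < n → (z * n) • b n = z • a := fun z n hn => by
    rw [mul_smul, hbspec n hn]
  have hcancel : ∀ (x y : A) (z : ℤ), z ≠ 0 → z • x = z • y → x = y := by
    intro x y z hz h
    have h0 : z • (x - y) = 0 := by rw [smul_sub, h, sub_self]
    have h1 : (z.natAbs : ℤ) • (x - y) = 0 := by
      rcases Int.natAbs_eq z with he | he
      · rw [← he, h0]
      · rw [← neg_neg ((z.natAbs : ℤ)), ← he, neg_zsmul, h0, neg_zero]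
    rw [natCast_zsmul] at h1
    exact sub_eq_zero.mp (htf (x - y) z.natAbs (Int.natAbs_pos.mpr hz) h1)
  set f : ℚ → A := fun q => q.num • b q.den with hf
  have hnum : ∀ q : ℚ, ((q.num : ℚ)) = q * q.den := by
    intro q
    have h := Rat.num_div_den q
    rw [div_eq_iff (by exact_mod_cast q.den_nz : ((q.den : ℚ)) ≠ 0)] at h
    exact h
  have key : ∀ q r : ℚ, (q + r).num * (q.den * r.den) =
      (q.num * r.den + r.num * q.den) * ((q + r).den) := by
    intro q r
    apply @Int.cast_injective ℚ _ _
    push_cast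
    rw [hnum (q + r), hnum q, hnum r]
    ring
  have hadd : ∀ q r : ℚ, f (q + r) = f q + f r := by
    intro q r
    set s := q + r with hs
    apply hcancel _ _ ((s.den : ℤ) * (q.den * r.den))
      (by simp [q.den_nz, r.den_nz, s.den_nz])
    have lhs : ((s.den : ℤ) * (q.den * r.den)) • f s
        = (s.num * ((q.den : ℤ) * (r.den : ℤ))) • a := by
      simp only [hf]
      rw [← mul_smul,
        show ((s.den : ℤ) * ((q.den : ℤ) * (r.den : ℤ)) * s.num)
          = (s.num * ((q.den : ℤ) * (r.den : ℤ))) * (s.den : ℤ) from by ring,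
        hzb _ _ s.pos]
    have rhs : ((s.den : ℤ) * (q.den * r.den)) • (f q + f r) =
        ((q.num * (r.den : ℤ) + r.num * (q.den : ℤ)) * (s.den : ℤ)) • a := by
      rw [smul_add]
      simp only [hf]
      rw [← mul_smul, ← mul_smul,
        show ((s.den : ℤ) * ((q.den : ℤ) * (r.den : ℤ)) * q.num)
          = (q.num * (r.den : ℤ) * (s.den : ℤ)) * (q.den : ℤ) from by ring,
        show ((s.den : ℤ) * ((q.den : ℤ) * (r.den : ℤ)) * r.num)
          = (r.num * (q.den : ℤ) * (s.den : ℤ)) * (r.den : ℤ) from by ring,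
        hzb _ _ q.pos, hzb _ _ r.pos, ← add_smul]
      ring_nf
    rw [lhs, rhs]
    congr 1
    exact_mod_cast key q r
  refine ⟨AddMonoidHom.mk' f hadd, ?_⟩
  rw [injective_iff_map_eq_zero]
  intro q hq
  have hq' : f q = 0 := hq
  have h1 : q.num • a = 0 := by
    have h2 := congrArg (fun x => (q.den : ℤ) • x) hq'
    simp only [smul_zero, hf] at h2
    rw [← mul_smul, mul_comm, hzb _ _ q.pos] at h2
    exact h2
  by_contra hq0
  have hnum0 : q.num ≠ 0 := Rat.num_ne_zero.mpr hq0
  have h2 : (q.num.natAbs : ℤ) • a = 0 := by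
    rcases Int.natAbs_eq q.num with he | he
    · rw [← he, h1]
    · rw [← neg_neg ((q.num.natAbs : ℤ)), ← he, neg_zsmul, h1, neg_zero]
  rw [natCast_zsmul] at h2
  exact ha (htf a q.num.natAbs (Int.natAbs_pos.mpr hnum0) h2)

lemma rat_span :
    ∃ (V : Type) (_ : AddCommGroup V) (_ : Module ℚ V) (ι : (ℕ → ℤ) →+ V),
      Submodule.span ℚ (Set.range ι) = ⊤ ∧ #V = 2 ^ aleph0 := by
  set ι₀ : (ℕ → ℤ) →+ (ℕ → ℚ) :=
    { toFun := fun x i => ((x i : ℤ) : ℚ)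
      map_zero' := by funext i; simp
      map_add' := by intro x y; funext i; push_cast; simp } with hι₀
  set W : Submodule ℚ (ℕ → ℚ) := Submodule.span ℚ (Set.range ι₀) with hW
  set ι : (ℕ → ℤ) →+ W :=
    { toFun := fun x => ⟨ι₀ x, Submodule.subset_span (Set.mem_range_self x)⟩
      map_zero' := by ext; simp
      map_add' := by intro x y; ext; simp } with hι
  refine ⟨W, inferInstance, inferInstance, ι, ?_, ?_⟩
  · -- span of range ι is top
    rw [eq_top_iff]
    rintro ⟨v, hv⟩ -
    have hle : Submodule.span ℚ (Set.range ι₀) ≤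
        Submodule.map W.subtype (Submodule.span ℚ (Set.range ι)) := by
      rw [Submodule.span_le]
      rintro _ ⟨x, rfl⟩
      exact ⟨ι x, Submodule.subset_span (Set.mem_range_self x), rfl⟩
    obtain ⟨w, hw, hww⟩ := hle hv
    have : w = ⟨v, hv⟩ := Subtype.ext hww
    rwa [← this]
  · apply le_antisymm
    · calc #W ≤ #(ℕ → ℚ) := mk_subtype_le _
        _ = #ℚ ^ (ℵ₀ : Cardinal) := by rw [← power_def, mk_nat]
        _ ≤ (ℵ₀ : Cardinal) ^ (ℵ₀ : Cardinal) := power_le_power_right (mk_le_aleph0)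
        _ = 2 ^ (ℵ₀ : Cardinal) := power_self_eq le_rfl
    · have hinj : Function.Injective ι := by
        intro x y hxy
        have := congrArg (fun w : W => (w : ℕ → ℚ)) hxy
        funext i
        have h2 := congrArg (fun g : ℕ → ℚ => g i) this
        simp only [hι, hι₀, AddMonoidHom.coe_mk, ZeroHom.coe_mk] at h2
        exact_mod_cast h2
      calc (2 : Cardinal) ^ (ℵ₀ : Cardinal) = #(ℕ → ℤ) := by
            rw [← power_def, mk_int, mk_nat, power_self_eq le_rfl]
        _ ≤ #W := mk_le_of_injective hinj

lemma div_elt_of_not_slender (A : Type) [AddCommGroup A]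
    (hcard : #A < 2 ^ aleph0)
    (htf : ∀ (x : A) (n : ℕ), 0 < n → n • x = 0 → x = 0)
    (φ : (ℕ → ℤ) →+ A)
    (h : ∀ n : ℕ, ∃ x : ℕ → ℤ, (∀ i < n, x i = 0) ∧ φ x ≠ 0) :
    ∃ a : A, a ≠ 0 ∧ ∀ n : ℕ, 0 < n → ∃ c : A, n • c = a := by
  classical
  by_contra hnd
  push_neg at hnd
  -- witnesses
  choose z hz1 hz2 using h
  choose q hq1 hq2 using fun k => hnd (φ (z k)) (hz2 k)
  -- cumulative products
  set d : ℕ → ℕ := fun k => ∏ j ∈ Finset.range k, q j with hd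
  have hdpos : ∀ k, 0 < d k := fun k => Finset.prod_pos (fun j _ => hq1 j)
  have hdsucc : ∀ k, d (k + 1) = d k * q k := fun k => Finset.prod_range_succ q k
  -- coefficients
  set e : (ℕ → Bool) → ℕ → ℤ := fun c k => if c k then (d k : ℤ) else 0 with he
  set e' : (ℕ → Bool) → ℕ → ℕ → ℤ :=
    fun c m k => if c k then (∏ j ∈ Finset.Ico m k, (q j : ℤ)) else 0 with he'
  have hee' : ∀ c m k, m ≤ k → e c k = (d m : ℤ) * e' c m k := by
    intro c m k hmk
    by_cases hck : c k
    · simp only [he, he', if_pos hck]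
      have hprod : d k = d m * ∏ j ∈ Finset.Ico m k, q j := by
        rw [hd]
        simp only [Finset.range_eq_Ico]
        exact (Finset.prod_Ico_consecutive q (Nat.zero_le m) hmk).symm
      rw [hprod]
      push_cast
      ring
    · simp [he, he', if_neg hck]
  -- the elements y c and remainders w c m
  set y : (ℕ → Bool) → (ℕ → ℤ) :=
    fun c i => ∑ k ∈ Finset.range (i + 1), e c k * z k i with hy
  set w : (ℕ → Bool) → ℕ → (ℕ → ℤ) :=
    fun c m i => ∑ k ∈ Finset.Ico m (i + 1), e' c m k * z k i with hw
  have hzvan : ∀ k i, i < k → z k i = 0 := fun k i hik => hz1 k i hik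
  -- decomposition of y c
  have hdec : ∀ c m, y c = (∑ k ∈ Finset.range m, e c k • z k) + (d m : ℤ) • (w c m) := by
    intro c m
    funext i
    simp only [Pi.add_apply, Pi.smul_apply, Finset.sum_apply, smul_eq_mul]
    rcases le_or_gt m (i + 1) with hmi | hmi
    · rw [hy]
      simp only []
      rw [Finset.range_eq_Ico, ← Finset.sum_Ico_consecutive _ (Nat.zero_le m) hmi,
        ← Finset.range_eq_Ico]
      congr 1
      rw [hw]
      simp only []
      rw [Finset.mul_sum]
      refine Finset.sum_congr rfl (fun k hk => ?_)
      rw [hee' c m k (Finset.mem_Ico.mp hk).1]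
      ring
    · -- i + 1 < m : remainder is empty, head has extra vanishing terms
      have hwz : w c m i = 0 := by
        rw [hw]
        simp only []
        rw [Finset.Ico_eq_empty (by omega), Finset.sum_empty]
      rw [hwz, mul_zero, add_zero, hy]
      simp only []
      rw [Finset.range_eq_Ico, Finset.range_eq_Ico, ← Finset.sum_Ico_consecutive _ (Nat.zero_le (i + 1)) hmi.le,
        ← Finset.range_eq_Ico]
      have : ∑ k ∈ Finset.Ico (i + 1) m, e c k * z k i = 0 :=
        Finset.sum_eq_zero fun k hk => by
          rw [hzvan k i (by exact (Finset.mem_Ico.mp hk).1), mul_zero]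
      rw [this, add_zero]
  -- φ applied to the decomposition
  have hφdec : ∀ c m, φ (y c) =
      (∑ k ∈ Finset.range m, e c k • φ (z k)) + (d m : ℤ) • φ (w c m) := by
    intro c m
    rw [hdec c m, map_add, map_zsmul, map_sum]
    congr 1
    refine Finset.sum_congr rfl (fun k _ => ?_)
    rw [map_zsmul]
  -- the map c ↦ φ (y c) is not injective
  have hnotinj : ¬ Function.Injective (fun c : ℕ → Bool => φ (y c)) := by
    intro hinj
    have h1 : #(ℕ → Bool) ≤ #A := mk_le_of_injective hinj
    rw [← power_def, mk_bool, mk_nat] at h1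
    exact absurd (h1.trans_lt hcard) (lt_irrefl _)
  rw [Function.not_injective_iff] at hnotinj
  obtain ⟨c, c', hF, hcc⟩ := hnotinj
  -- least index where they differ
  have hex : ∃ k, c k ≠ c' k := by
    by_contra hno
    push_neg at hno
    exact hcc (funext hno)
  set m := Nat.find hex with hm
  have hmne : c m ≠ c' m := Nat.find_spec hex
  have hmlt : ∀ k < m, c k = c' k := fun k hk => by
    have := Nat.find_min hex hk
    push_neg at this
    exact this
  -- subtract the two decompositions at level m+1
  have hsub : (0 : A) = (e c m - e c' m) • φ (z m) +
      (d (m + 1) : ℤ) • (φ (w c (m + 1)) - φ (w c' (m + 1))) := by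
    have h1 := hφdec c (m + 1)
    have h2 := hφdec c' (m + 1)
    have h3 : φ (y c) - φ (y c') = 0 := by rw [hF, sub_self]
    rw [h1, h2] at h3
    have h4 : ∀ k ∈ Finset.range m, e c k • φ (z k) = e c' k • φ (z k) := by
      intro k hk
      rw [he]
      simp only []
      rw [hmlt k (Finset.mem_range.mp hk)]
    rw [Finset.sum_range_succ, Finset.sum_range_succ, Finset.sum_congr rfl h4] at h3
    rw [sub_smul, smul_sub, ← h3]
    abel
  -- conclude divisibility of φ (z m), contradiction
  set Δ := φ (w c (m + 1)) - φ (w c' (m + 1)) with hΔ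
  have key : ∃ cc : A, q m • cc = φ (z m) := by
    have hd1 : (d (m + 1) : ℤ) = (d m : ℤ) * (q m : ℤ) := by
      rw [hdsucc m]; push_cast; ring
    by_cases hcm : c m = true
    · have hcm' : c' m = false := by
        cases hc' : c' m
        · rfl
        · exact absurd (hcm.trans hc'.symm) hmne
      have hse : e c m - e c' m = (d m : ℤ) := by
        rw [he]; simp only []; rw [hcm, hcm']; simp
      rw [hse, hd1] at hsub
      have h5 : (d m : ℤ) • φ (z m) = -(((d m : ℤ) * (q m : ℤ)) • Δ) := by
        rw [eq_neg_iff_add_eq_zero]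
        exact hsub.symm
      have h6 : (d m : ℤ) • (φ (z m) - (q m : ℤ) • (-Δ)) = 0 := by
        rw [smul_sub, h5, smul_neg, smul_neg, ← mul_smul,
          sub_neg_eq_add, neg_add_cancel]
      rw [natCast_zsmul] at h6
      have h7 := htf _ (d m) (hdpos m) h6
      refine ⟨-Δ, ?_⟩
      rw [← natCast_zsmul]
      rw [sub_eq_zero] at h7
      exact h7.symm
    · have hcmf : c m = false := by revert hcm; cases c m <;> simp
      have hcm' : c' m = true := by
        cases hc' : c' m
        · exact absurd (hcmf.trans hc'.symm) hmne
        · rfl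
      have hse : e c m - e c' m = -(d m : ℤ) := by
        rw [he]; simp only []; rw [hcmf, hcm']; simp
      rw [hse, hd1, neg_smul] at hsub
      have h5 : (d m : ℤ) • φ (z m) = ((d m : ℤ) * (q m : ℤ)) • Δ :=
        neg_add_eq_zero.mp hsub.symm
      have h6 : (d m : ℤ) • (φ (z m) - (q m : ℤ) • Δ) = 0 := by
        rw [smul_sub, ← mul_smul, h5, sub_self]
      rw [natCast_zsmul] at h6
      have h7 := htf _ (d m) (hdpos m) h6
      refine ⟨Δ, ?_⟩
      rw [← natCast_zsmul]
      rw [sub_eq_zero] at h7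
      exact h7.symm
  obtain ⟨cc, hccq⟩ := key
  exact hq2 m cc hccq

open Cardinal in
/-- If `A` is a non-slender abelian group of cardinality less than the continuum, then
`Hom(∏_{n ∈ ℕ} ℤ, A)` has cardinality exactly `2 ^ (2 ^ ℵ₀)`. -/
theorem stmt_8 (A : Type) [AddCommGroup A] (hA : ¬ Slender A)
    (hcard : #A < 2 ^ aleph0) :
    #((ℕ → ℤ) →+ A) = (2 : Cardinal) ^ ((2 : Cardinal) ^ aleph0) := by
  refine le_antisymm (card_hom_le A hcard.le) ?_
  rw [Slender] at hA
  push_neg at hA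
  obtain ⟨φ, hφ⟩ := hA
  have hφ' : ∀ n : ℕ, ∃ x : ℕ → ℤ, (∀ i < n, x i = 0) ∧ φ x ≠ 0 := by
    intro n
    obtain ⟨x, hx1, hx2⟩ := hφ n
    exact ⟨x, hx1, hx2⟩
  by_cases htor : ∃ a : A, a ≠ 0 ∧ ∃ n : ℕ, 0 < n ∧ n • a = 0
  · -- torsion case
    obtain ⟨a, ha, n, hn, hna⟩ := htor
    obtain ⟨p, hp, b, hb, hob⟩ := prime_order_elt A a ha n hn hna
    obtain ⟨j, hj⟩ := zmod_hom A p b hb hob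
    obtain ⟨ι, hspan, hV⟩ := zmod_pi p
    exact core A (ZMod p) (ℕ → ZMod p)
      ((lt_aleph0_of_finite _).trans (Cardinal.cantor ℵ₀)) hV ι hspan j hj
  · -- torsion-free case
    have htf : ∀ (x : A) (n : ℕ), 0 < n → n • x = 0 → x = 0 := by
      intro x n hn hnx
      by_contra hx
      exact htor ⟨x, hx, n, hn, hnx⟩
    obtain ⟨a, ha, hdiv⟩ := div_elt_of_not_slender A hcard htf φ hφ'
    obtain ⟨j, hj⟩ := rat_hom A htf a ha hdiv
    obtain ⟨V, _, _, ι, hspan, hV⟩ := rat_span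
    exact core A ℚ V (mk_le_aleph0.trans_lt (Cardinal.cantor ℵ₀)) hV ι hspan j hj
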